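/- Suppose the block matrix [[p,q,r],[u,v,w],[x,y,z]] (size N+m+N) is invertible with inverse [[P,Q,R],[U,V,W],[X,Y,Z]]. Then for any m×N matrix ψ: ([[a,b,c],[d,e,f],[g,h,j]]·[[1,0,0],[0,1,ψ],[0,0,1]]) ⋆ p = (a⋆p) · Γ, where Γ = [[1,0,0,Qψ,0],[0,1,0,0,0],[0,0,1,Vψ,0],[0,0,0,1,0],[0,0,0,Yψ,1]] relative to the splitting N+N+m+N+N. -/

import Mathlib

open Matrix

section Prelude

variable {R : Type*}

/-- A 3×3 block matrix. -/
def blk3 {i1 i2 i3 j1 j2 j3 : Type*}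
    (A : Matrix i1 j1 R) (B : Matrix i1 j2 R) (C : Matrix i1 j3 R)
    (D : Matrix i2 j1 R) (E : Matrix i2 j2 R) (F : Matrix i2 j3 R)
    (G : Matrix i3 j1 R) (H : Matrix i3 j2 R) (J : Matrix i3 j3 R) :
    Matrix (i1 ⊕ (i2 ⊕ i3)) (j1 ⊕ (j2 ⊕ j3)) R :=
  Matrix.fromBlocks A (Matrix.fromCols B C) (Matrix.fromRows D G)
    (Matrix.fromBlocks E F H J)

/-- The data of a square matrix split into 3×3 blocks with diagonal index types
`i1`, `i2`, `i3`. -/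
structure Blk (R i1 i2 i3 : Type*) where
  a : Matrix i1 i1 R
  b : Matrix i1 i2 R
  c : Matrix i1 i3 R
  d : Matrix i2 i1 R
  e : Matrix i2 i2 R
  f : Matrix i2 i3 R
  g : Matrix i3 i1 R
  h : Matrix i3 i2 R
  j : Matrix i3 i3 R

def Blk.toMatrix {i1 i2 i3 : Type*} (M : Blk R i1 i2 i3) :
    Matrix (i1 ⊕ (i2 ⊕ i3)) (i1 ⊕ (i2 ⊕ i3)) R :=
  blk3 M.a M.b M.c M.d M.e M.f M.g M.h M.j

/-- The ⋆-product of the paper, on the level of block data: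
`A ⋆ P` is the `(j1+i1)+m+(i3+j3)` block matrix
`[[p,0,q,0,r],[bu,a,bv,c,bw],[eu,d,ev,f,ew],[hu,g,hv,j,hw],[x,0,y,0,z]]`. -/
def starB [CommRing R] {i1 m i3 j1 j3 : Type*} [Fintype m]
    (A : Blk R i1 m i3) (P : Blk R j1 m j3) : Blk R (j1 ⊕ i1) m (i3 ⊕ j3) where
  a := Matrix.fromBlocks P.a 0 (A.b * P.d) A.a
  b := Matrix.fromRows P.b (A.b * P.e)
  c := Matrix.fromBlocks 0 P.c A.c (A.b * P.f)
  d := Matrix.fromCols (A.e * P.d) A.d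
  e := A.e * P.e
  f := Matrix.fromCols A.f (A.e * P.f)
  g := Matrix.fromBlocks (A.h * P.d) A.g P.g 0
  h := Matrix.fromRows (A.h * P.e) P.h
  j := Matrix.fromBlocks A.j (A.h * P.f) 0 P.j

/-- The subgroup `P` of block matrices `[[α,φ,θ],[0,1,ψ],[0,0,β]]` with `α`, `β`
invertible. -/
def Pset (R : Type*) [CommRing R] (i1 i2 i3 : Type*)
    [Fintype i1] [Fintype i3] [DecidableEq i1] [DecidableEq i2] [DecidableEq i3] :
    Set (Matrix (i1 ⊕ (i2 ⊕ i3)) (i1 ⊕ (i2 ⊕ i3)) R) :=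
  {gm | ∃ (α : Matrix i1 i1 R) (φ : Matrix i1 i2 R) (θ : Matrix i1 i3 R)
      (ψ : Matrix i2 i3 R) (β : Matrix i3 i3 R),
    IsUnit α ∧ IsUnit β ∧ gm = blk3 α φ θ 0 1 ψ 0 0 β}

end Prelude

section Aux
variable {R : Type*}

theorem blk3_mul [CommRing R] {i1 i2 i3 j1 j2 j3 l1 l2 l3 : Type*}
    [Fintype j1] [Fintype j2] [Fintype j3]
    (A : Matrix i1 j1 R) (B : Matrix i1 j2 R) (C : Matrix i1 j3 R)
    (D : Matrix i2 j1 R) (E : Matrix i2 j2 R) (F : Matrix i2 j3 R)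
    (G : Matrix i3 j1 R) (H : Matrix i3 j2 R) (J : Matrix i3 j3 R)
    (A' : Matrix j1 l1 R) (B' : Matrix j1 l2 R) (C' : Matrix j1 l3 R)
    (D' : Matrix j2 l1 R) (E' : Matrix j2 l2 R) (F' : Matrix j2 l3 R)
    (G' : Matrix j3 l1 R) (H' : Matrix j3 l2 R) (J' : Matrix j3 l3 R) :
    blk3 A B C D E F G H J * blk3 A' B' C' D' E' F' G' H' J' =
      blk3 (A*A'+B*D'+C*G') (A*B'+B*E'+C*H') (A*C'+B*F'+C*J')
           (D*A'+E*D'+F*G') (D*B'+E*E'+F*H') (D*C'+E*F'+F*J')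
           (G*A'+H*D'+J*G') (G*B'+H*E'+J*H') (G*C'+H*F'+J*J') := by
  ext i j
  rcases i with i | i | i <;> rcases j with j | j | j <;>
    simp [blk3, Matrix.mul_apply, Fintype.sum_sum_type, Matrix.add_apply,
      Finset.sum_add_distrib] <;> ring

theorem blk3_eq_iff {i1 i2 i3 j1 j2 j3 : Type*}
    {A : Matrix i1 j1 R} {B : Matrix i1 j2 R} {C : Matrix i1 j3 R}
    {D : Matrix i2 j1 R} {E : Matrix i2 j2 R} {F : Matrix i2 j3 R}
    {G : Matrix i3 j1 R} {H : Matrix i3 j2 R} {J : Matrix i3 j3 R}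
    {A' : Matrix i1 j1 R} {B' : Matrix i1 j2 R} {C' : Matrix i1 j3 R}
    {D' : Matrix i2 j1 R} {E' : Matrix i2 j2 R} {F' : Matrix i2 j3 R}
    {G' : Matrix i3 j1 R} {H' : Matrix i3 j2 R} {J' : Matrix i3 j3 R} :
    blk3 A B C D E F G H J = blk3 A' B' C' D' E' F' G' H' J' ↔
      A = A' ∧ B = B' ∧ C = C' ∧ D = D' ∧ E = E' ∧ F = F' ∧ G = G' ∧ H = H' ∧ J = J' := by
  simp only [blk3, fromBlocks_inj, fromCols_inj.eq_iff, fromRows_inj.eq_iff]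
  tauto

theorem blk3_one {i1 i2 i3 : Type*} [DecidableEq i1] [DecidableEq i2] [DecidableEq i3]
    [Zero R] [One R] :
    (1 : Matrix (i1 ⊕ (i2 ⊕ i3)) (i1 ⊕ (i2 ⊕ i3)) R) = blk3 1 0 0 0 1 0 0 0 1 := by
  ext i j
  rcases i with i | i | i <;> rcases j with j | j | j <;>
    simp [blk3, Matrix.one_apply]

theorem fromColumns_add' [AddZeroClass R] {m n1 n2 : Type*}
    (A B : Matrix m n1 R) (C D : Matrix m n2 R) :
    fromCols A C + fromCols B D = fromCols (A + B) (C + D) := by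
  ext i j; rcases j with j | j <;> simp

theorem fromRows_add' [AddZeroClass R] {m1 m2 n : Type*}
    (A B : Matrix m1 n R) (C D : Matrix m2 n R) :
    fromRows A C + fromRows B D = fromRows (A + B) (C + D) := by
  ext i j; rcases i with i | i <;> simp

theorem fromColumns_fromRows_zero [Zero R] {m1 m2 n1 n2 : Type*}
    (a : Matrix m1 n1 R) (b : Matrix m2 n1 R) :
    fromCols (fromRows a b) (0 : Matrix (m1 ⊕ m2) n2 R) = fromBlocks a 0 b 0 := by
  rw [show (0 : Matrix (m1 ⊕ m2) n2 R) = fromRows 0 0 by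
    ext i j; rcases i with i | i <;> simp,
    fromCols_fromRows_eq_fromBlocks]

end Aux

/-- if `p = [[p,q,r],[u,v,w],[x,y,z]]` is invertible with inverse
`[[P,Q,R],[U,V,W],[X,Y,Z]]`, then for any `m×N` matrix `ψ`,
`(a · [[1,0,0],[0,1,ψ],[0,0,1]]) ⋆ p = (a ⋆ p) · Γ` with
`Γ = [[1,0,0,Qψ,0],[0,1,0,0,0],[0,0,1,Vψ,0],[0,0,0,1,0],[0,0,0,Yψ,1]]`. -/
theorem stmt8 {k : Type*} [Field k] {m N : ℕ}
    (A P : Blk k (Fin N) (Fin m) (Fin N)) (Pinv : Blk k (Fin N) (Fin m) (Fin N))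
    (h1 : P.toMatrix * Pinv.toMatrix = 1) (h2 : Pinv.toMatrix * P.toMatrix = 1)
    (ψ : Matrix (Fin m) (Fin N) k) :
    (starB ⟨A.a, A.b, A.b * ψ + A.c, A.d, A.e, A.e * ψ + A.f,
        A.g, A.h, A.h * ψ + A.j⟩ P).toMatrix
      = (starB A P).toMatrix *
        blk3 1 0 (Matrix.fromBlocks (Pinv.b * ψ) 0 0 0)
          0 (1 : Matrix (Fin m) (Fin m) k) (Matrix.fromCols (Pinv.e * ψ) 0)
          0 0 (Matrix.fromBlocks 1 0 (Pinv.h * ψ) 1) := by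
  rw [Blk.toMatrix, Blk.toMatrix] at h1
  rw [blk3_mul, blk3_one, blk3_eq_iff] at h1
  obtain ⟨-, K1, -, -, K2, -, -, K3, -⟩ := h1
  have Q1 : P.a * (Pinv.b * ψ) + P.b * (Pinv.e * ψ) + P.c * (Pinv.h * ψ) = 0 := by
    have := congrArg (· * ψ) K1
    simpa [Matrix.add_mul, Matrix.mul_assoc] using this
  have Q2 : P.d * (Pinv.b * ψ) + P.e * (Pinv.e * ψ) + P.f * (Pinv.h * ψ) = ψ := by
    have := congrArg (· * ψ) K2
    simpa [Matrix.add_mul, Matrix.mul_assoc] using this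
  have Q3 : P.g * (Pinv.b * ψ) + P.h * (Pinv.e * ψ) + P.j * (Pinv.h * ψ) = 0 := by
    have := congrArg (· * ψ) K3
    simpa [Matrix.add_mul, Matrix.mul_assoc] using this
  have L : ∀ {i : Type} (X : Matrix (Fin m) (Fin m) k),
      X * P.d * (Pinv.b * ψ) + X * P.e * (Pinv.e * ψ) + X * P.f * (Pinv.h * ψ) = X * ψ := by
    intro _ X
    rw [Matrix.mul_assoc, Matrix.mul_assoc, Matrix.mul_assoc, ← Matrix.mul_add,
      ← Matrix.mul_add, Q2]
  simp only [Blk.toMatrix, starB]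
  rw [blk3_mul, blk3_eq_iff]
  refine ⟨?_, ?_, ?_, ?_, ?_, ?_, ?_, ?_, ?_⟩ <;>
    simp only [Matrix.fromBlocks_multiply, Matrix.fromRows_mul_fromCols,
      Matrix.fromCols_mul_fromBlocks, Matrix.fromBlocks_mul_fromRows,
      Matrix.mul_fromCols, Matrix.fromRows_mul, Matrix.mul_zero, Matrix.zero_mul,
      Matrix.mul_one, Matrix.one_mul, add_zero, zero_add, Matrix.fromBlocks_add,
      fromColumns_add', fromRows_add', Matrix.mul_assoc,
      fromColumns_fromRows_zero, Matrix.fromBlocks_inj, fromCols_inj.eq_iff]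
  all_goals
    have hb := congrArg (A.b * ·) Q2
    have he := congrArg (A.e * ·) Q2
    have hh := congrArg (A.h * ·) Q2
    simp only [Matrix.mul_add] at hb he hh
    and_intros <;>
      first
        | trivial
        | exact Q1.symm
        | exact Q3.symm
        | (rw [← hb]; abel)
        | (rw [← he]; abel)
        | (rw [← hh]; abel)
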